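/- Self-duality implies Tsirelson's bound: let X ⊆ NS_2 be a closed convex cone of two-party correlations that respects the symmetries, i.e., X is invariant under the party swap x^{s_1 s_2} ↦ x^{s_2 s_1}, under the relabeling of the two observables of either party (swapping the values -1 and +1 of the corresponding setting index while fixing 0), and under flipping the outcome of any single observable of any party (negating x^{s_1 s_2} whenever the corresponding setting index equals the chosen value in {-1,+1}, and fixing all other components). Suppose X is self-dual in the sense that the linear map g ↦ (s ↦ ∑_{t∈S^2} F^{s_1 t_1} F^{s_2 t_2} g_t) is a bijection from X* onto X. Then for all x ∈ X one has x^{-1,-1} + x^{-1,+1} + x^{+1,-1} - x^{+1,+1} ≤ 2√2 · x^{0,0}, and there exists x ∈ X with x^{0,0} = 1 attaining equality; i.e., the maximal CHSH value of X is exactly 2√2. -/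

import Mathlib

open Finset

noncomputable section

/-- The dual cone of a set of real-valued functions on a finite index set. -/
def dualCone {I : Type*} [Fintype I] (C : Set (I → ℝ)) : Set (I → ℝ) :=
  {g | ∀ x ∈ C, 0 ≤ ∑ i, g i * x i}

/-- The convex cone generated by a set: all finite nonnegative linear combinations. -/
def coneHull {E : Type*} [AddCommMonoid E] [Module ℝ E] (X : Set E) : Set E :=
  {y | ∃ (m : ℕ) (c : Fin m → ℝ) (v : Fin m → E),
    (∀ i, 0 ≤ c i) ∧ (∀ i, v i ∈ X) ∧ y = ∑ i, c i • v i}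

/-- The square cone `Sq ⊆ ℝ^S`, where `S = {-1,0,+1}` is `SignType`. -/
def Sq : Set (SignType → ℝ) :=
  {x | -x 0 ≤ x (-1) ∧ x (-1) ≤ x 0 ∧ -x 0 ≤ x 1 ∧ x 1 ≤ x 0}

/-- `hF v t s = h_v(t,s)`: equals `t` if `v = s`, `1` if `v = 0`, and `0` if `v = -s`. -/
def hF (v t s : SignType) : ℝ := if v = s then (t : ℝ) else if v = 0 then 1 else 0

/-- The no-signaling cone `NS_n`. -/
def NS (n : ℕ) : Set ((Fin n → SignType) → ℝ) :=
  {x | ∀ s t : Fin n → SignType, (∀ j, s j ≠ 0) → (∀ j, t j ≠ 0) →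
    0 ≤ ∑ v : Fin n → SignType, (∏ j, hF (v j) (t j) (s j)) * x v}

/-- Local deterministic strategies: `a j 0 = 1` and `a j (±1) ∈ {-1,+1}`. -/
def IsDet {n : ℕ} (a : Fin n → SignType → ℝ) : Prop :=
  ∀ j, a j 0 = 1 ∧ (a j (-1) = -1 ∨ a j (-1) = 1) ∧ (a j 1 = -1 ∨ a j 1 = 1)

/-- The Bell cone `B_n`: the convex cone generated by the local deterministic points. -/
def Bell (n : ℕ) : Set ((Fin n → SignType) → ℝ) :=
  coneHull {x | ∃ a : Fin n → SignType → ℝ, IsDet a ∧ x = fun s => ∏ j, a j (s j)}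

/-- The tensor `F_{st}` (lowered indices). -/
def Flo (s t : SignType) : ℝ :=
  if s = 0 then (if t = 0 then 1 else 0)
  else if t = 0 then 0
  else if s = 1 ∧ t = 1 then -(1/2) else 1/2

/-- The tensor `F^{st}` (raised indices). -/
def Fup (s t : SignType) : ℝ :=
  if s = 0 then (if t = 0 then 1 else 0)
  else if t = 0 then 0
  else if s = 1 ∧ t = 1 then -1 else 1

/-- The pair of settings `(a, b)`. -/
def pr (a b : SignType) : Fin 2 → SignType := ![a, b]

-- auxiliary
lemma sum_expand (f : (Fin 2 → SignType) → ℝ) : ∑ v, f v =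
    f (pr (-1) (-1)) + f (pr (-1) 0) + f (pr (-1) 1) + f (pr 0 (-1)) + f (pr 0 0) + f (pr 0 1)
      + f (pr 1 (-1)) + f (pr 1 0) + f (pr 1 1) := by
  rw [← (finTwoArrowEquiv SignType).symm.sum_comp, Fintype.sum_prod_type]
  show ∑ a : SignType, ∑ b : SignType, f (pr a b) = _
  rw [show (univ : Finset SignType) = {0, -1, 1} by decide]
  simp [Finset.sum_insert, Finset.mem_insert]
  ring

@[simp] lemma pr_zero (a b : SignType) : pr a b 0 = a := rfl
@[simp] lemma pr_one (a b : SignType) : pr a b 1 = b := rfl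
lemma pr_eta (s : Fin 2 → SignType) : s = pr (s 0) (s 1) := by
  funext j; fin_cases j <;> simp [pr]

@[simp] lemma update_pr0 (a b c : SignType) : Function.update (pr a b) 0 c = pr c b := by
  funext j; fin_cases j <;> simp [pr, Function.update]
@[simp] lemma update_pr1 (a b c : SignType) : Function.update (pr a b) 1 c = pr a c := by
  funext j; fin_cases j <;> simp [pr, Function.update]
@[simp] lemma swap_pr (a b : SignType) :
    (fun j => pr a b (Equiv.swap 0 1 j)) = pr b a := by
  funext j; fin_cases j <;> simp [pr, Equiv.swap_apply_left, Equiv.swap_apply_right]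

/-- The slice element `p·U + q·W`. -/
def slc (p q : ℝ) : (Fin 2 → SignType) → ℝ :=
  fun s => if s 0 = 0 ∧ s 1 = 0 then p else q * Fup (s 0) (s 1)

lemma slc_00 (p q : ℝ) : slc p q (pr 0 0) = p := by simp [slc]

lemma NSval {x : (Fin 2 → SignType) → ℝ} (hx : x ∈ NS 2) (a b : SignType)
    (ha : a ≠ 0) (hb : b ≠ 0) (t u : ℝ) (ht : t = 1 ∨ t = -1) (hu : u = 1 ∨ u = -1) :
    0 ≤ x (pr 0 0) + t * x (pr a 0) + u * x (pr 0 b) + t * u * x (pr a b) := by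
  have key : ∀ t' u' : SignType, t' ≠ 0 → u' ≠ 0 →
      0 ≤ x (pr 0 0) + (t':ℝ) * x (pr a 0) + (u':ℝ) * x (pr 0 b)
        + (t':ℝ) * (u':ℝ) * x (pr a b) := by
    intro t' u' ht' hu'
    have H := hx (pr a b) (pr t' u')
      (by intro j; fin_cases j <;> simpa [pr]) (by intro j; fin_cases j <;> simpa [pr])
    rw [sum_expand] at H
    simp only [Fin.prod_univ_two, pr_zero, pr_one] at H
    cases a <;> cases b <;> cases t' <;> cases u' <;>
      simp_all [hF] <;> linarith
  rcases ht with rfl | rfl <;> rcases hu with rfl | rfl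
  · simpa using key 1 1 one_ne_zero one_ne_zero
  · simpa using key 1 (-1) one_ne_zero (by decide)
  · simpa using key (-1) 1 (by decide) one_ne_zero
  · simpa using key (-1) (-1) (by decide) (by decide)

lemma NS_apex_nonneg {x : (Fin 2 → SignType) → ℝ} (hx : x ∈ NS 2) : 0 ≤ x (pr 0 0) := by
  have h1 := NSval hx 1 1 one_ne_zero one_ne_zero 1 1 (Or.inl rfl) (Or.inl rfl)
  have h2 := NSval hx 1 1 one_ne_zero one_ne_zero 1 (-1) (Or.inl rfl) (Or.inr rfl)
  have h3 := NSval hx 1 1 one_ne_zero one_ne_zero (-1) 1 (Or.inr rfl) (Or.inl rfl)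
  have h4 := NSval hx 1 1 one_ne_zero one_ne_zero (-1) (-1) (Or.inr rfl) (Or.inr rfl)
  linarith

lemma NS_comp_zero {x : (Fin 2 → SignType) → ℝ} (hx : x ∈ NS 2) (h0 : x (pr 0 0) = 0)
    (a b : SignType) (ha : a ≠ 0) (hb : b ≠ 0) :
    x (pr a 0) = 0 ∧ x (pr 0 b) = 0 ∧ x (pr a b) = 0 := by
  have h1 := NSval hx a b ha hb 1 1 (Or.inl rfl) (Or.inl rfl)
  have h2 := NSval hx a b ha hb 1 (-1) (Or.inl rfl) (Or.inr rfl)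
  have h3 := NSval hx a b ha hb (-1) 1 (Or.inr rfl) (Or.inl rfl)
  have h4 := NSval hx a b ha hb (-1) (-1) (Or.inr rfl) (Or.inr rfl)
  refine ⟨by linarith, by linarith, by linarith⟩

lemma NS_apex_zero {x : (Fin 2 → SignType) → ℝ} (hx : x ∈ NS 2) (h0 : x (pr 0 0) = 0) :
    x = 0 := by
  funext s
  rw [pr_eta s]
  show x _ = (0:ℝ)
  have h11 := NS_comp_zero hx h0 1 1 one_ne_zero one_ne_zero
  have h1n := NS_comp_zero hx h0 1 (-1) one_ne_zero (by decide)
  have hn1 := NS_comp_zero hx h0 (-1) 1 (by decide) one_ne_zero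
  have hnn := NS_comp_zero hx h0 (-1) (-1) (by decide) (by decide)
  cases hs0 : s 0 <;> cases hs1 : s 1 <;> simp_all

lemma Fup_comm (a b : SignType) : Fup a b = Fup b a := by
  cases a <;> cases b <;> simp [Fup]

/-- The self-duality linear map. -/
def lam (g : (Fin 2 → SignType) → ℝ) : (Fin 2 → SignType) → ℝ :=
  fun s => ∑ t : Fin 2 → SignType, Fup (s 0) (t 0) * Fup (s 1) (t 1) * g t

lemma lam_slc (p q : ℝ) : lam (slc p q) = slc p (2 * q) := by
  funext s
  rw [pr_eta s]
  show lam (slc p q) (pr (s 0) (s 1)) = _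
  unfold lam
  rw [sum_expand]
  cases s 0 <;> cases s 1 <;> simp [slc, Fup] <;> ring

lemma lam_adj (a b : (Fin 2 → SignType) → ℝ) :
    ∑ s, lam a s * b s = ∑ s, a s * lam b s := by
  unfold lam
  simp_rw [Finset.sum_mul, Finset.mul_sum]
  rw [Finset.sum_comm]
  refine Finset.sum_congr rfl fun s _ => Finset.sum_congr rfl fun t _ => ?_
  rw [Fup_comm (s 0), Fup_comm (s 1)]; ring

lemma slc_pair (p q p' q' : ℝ) : ∑ v, slc p q v * slc p' q' v = p * p' + 4 * (q * q') := by
  rw [sum_expand]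
  simp [slc, Fup]; ring

lemma slc_dot (p q : ℝ) (x : (Fin 2 → SignType) → ℝ) :
    ∑ v, slc p q v * x v = p * x (pr 0 0)
      + q * (x (pr (-1) (-1)) + x (pr (-1) 1) + x (pr 1 (-1)) - x (pr 1 1)) := by
  rw [sum_expand]
  simp [slc, Fup]; ring

@[simp] lemma st_a : ((0:SignType) = -1) ↔ False := by decide
@[simp] lemma st_b : ((0:SignType) = 1) ↔ False := by decide
@[simp] lemma st_c : ((-1:SignType) = 0) ↔ False := by decide
@[simp] lemma st_d : ((1:SignType) = 0) ↔ False := by decide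
@[simp] lemma st_e : ((-1:SignType) = 1) ↔ False := by decide
@[simp] lemma st_f : ((1:SignType) = -1) ↔ False := by decide

def opZ (x : (Fin 2 → SignType) → ℝ) : (Fin 2 → SignType) → ℝ :=
  fun s => (if s 0 = 0 then (1:ℝ) else -1) * (if s 1 = 0 then (1:ℝ) else -1) * x s
def opS (x : (Fin 2 → SignType) → ℝ) : (Fin 2 → SignType) → ℝ :=
  fun s => x (pr (s 1) (s 0))
def opA (x : (Fin 2 → SignType) → ℝ) : (Fin 2 → SignType) → ℝ :=
  fun s => (if s 1 = 1 then (-1:ℝ) else 1) * x (pr (-(s 0)) (s 1))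
def opB (x : (Fin 2 → SignType) → ℝ) : (Fin 2 → SignType) → ℝ :=
  fun s => (if s 0 = 1 then (-1:ℝ) else 1) * x (pr (s 0) (-(s 1)))

section ops
variable {X : Set ((Fin 2 → SignType) → ℝ)}

lemma opZ_mem (hflip : ∀ x ∈ X, ∀ j : Fin 2, ∀ u : SignType, u ≠ 0 →
      (fun s : Fin 2 → SignType => if s j = u then -(x s) else x s) ∈ X)
    {x} (hx : x ∈ X) : opZ x ∈ X := by
  have h1 := hflip x hx 0 (-1) (by decide)
  have h2 := hflip _ h1 0 1 (by decide)
  have h3 := hflip _ h2 1 (-1) (by decide)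
  have h4 := hflip _ h3 1 1 (by decide)
  convert h4 using 1
  funext s; rw [pr_eta s]
  cases s 0 <;> cases s 1 <;> norm_num [opZ]

lemma opS_mem (hswap : ∀ x ∈ X, (fun s : Fin 2 → SignType => x (fun j => s (Equiv.swap 0 1 j))) ∈ X)
    {x} (hx : x ∈ X) : opS x ∈ X := by
  have h1 := hswap x hx
  convert h1 using 1
  funext s; rw [pr_eta s]
  simp [opS]

lemma opA_mem (hrelabel : ∀ x ∈ X, ∀ j : Fin 2,
      (fun s : Fin 2 → SignType => x (Function.update s j (-(s j)))) ∈ X)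
    (hflip : ∀ x ∈ X, ∀ j : Fin 2, ∀ u : SignType, u ≠ 0 →
      (fun s : Fin 2 → SignType => if s j = u then -(x s) else x s) ∈ X)
    {x} (hx : x ∈ X) : opA x ∈ X := by
  have h1 := hrelabel x hx 0
  have h2 := hflip _ h1 1 1 (by decide)
  convert h2 using 1
  funext s; rw [pr_eta s]
  cases s 0 <;> cases s 1 <;> norm_num [opA]

lemma opB_mem (hrelabel : ∀ x ∈ X, ∀ j : Fin 2,
      (fun s : Fin 2 → SignType => x (Function.update s j (-(s j)))) ∈ X)
    (hflip : ∀ x ∈ X, ∀ j : Fin 2, ∀ u : SignType, u ≠ 0 →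
      (fun s : Fin 2 → SignType => if s j = u then -(x s) else x s) ∈ X)
    {x} (hx : x ∈ X) : opB x ∈ X := by
  have h1 := hrelabel x hx 1
  have h2 := hflip _ h1 0 1 (by decide)
  convert h2 using 1
  funext s; rw [pr_eta s]
  cases s 0 <;> cases s 1 <;> norm_num [opB]
end ops

noncomputable def avg2 (T : ((Fin 2 → SignType) → ℝ) → ((Fin 2 → SignType) → ℝ))
    (x : (Fin 2 → SignType) → ℝ) : (Fin 2 → SignType) → ℝ :=
  fun s => (x s + T x s) / 2

noncomputable def symOp (x : (Fin 2 → SignType) → ℝ) : (Fin 2 → SignType) → ℝ :=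
  avg2 opB (avg2 opA (avg2 opS (avg2 opZ x)))

section sym
variable {X : Set ((Fin 2 → SignType) → ℝ)}

lemma avg2_mem (hadd : ∀ x ∈ X, ∀ y ∈ X, x + y ∈ X)
    (hsmul : ∀ c : ℝ, 0 ≤ c → ∀ x ∈ X, c • x ∈ X)
    {T} (hT : ∀ x ∈ X, T x ∈ X) {x} (hx : x ∈ X) : avg2 T x ∈ X := by
  have h := hsmul 2⁻¹ (by norm_num) _ (hadd x hx _ (hT x hx))
  convert h using 1
  funext s; simp [avg2, Pi.smul_apply, Pi.add_apply, smul_eq_mul]; ring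

lemma symOp_mem (hadd : ∀ x ∈ X, ∀ y ∈ X, x + y ∈ X)
    (hsmul : ∀ c : ℝ, 0 ≤ c → ∀ x ∈ X, c • x ∈ X)
    (hswap : ∀ x ∈ X, (fun s : Fin 2 → SignType => x (fun j => s (Equiv.swap 0 1 j))) ∈ X)
    (hrelabel : ∀ x ∈ X, ∀ j : Fin 2,
      (fun s : Fin 2 → SignType => x (Function.update s j (-(s j)))) ∈ X)
    (hflip : ∀ x ∈ X, ∀ j : Fin 2, ∀ u : SignType, u ≠ 0 →
      (fun s : Fin 2 → SignType => if s j = u then -(x s) else x s) ∈ X)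
    {x} (hx : x ∈ X) : symOp x ∈ X := by
  exact avg2_mem hadd hsmul (fun y hy => opB_mem hrelabel hflip hy)
    (avg2_mem hadd hsmul (fun y hy => opA_mem hrelabel hflip hy)
      (avg2_mem hadd hsmul (fun y hy => opS_mem hswap hy)
        (avg2_mem hadd hsmul (fun y hy => opZ_mem hflip hy) hx)))
end sym

lemma symOp_eq (x : (Fin 2 → SignType) → ℝ) :
    symOp x = slc (x (pr 0 0))
      ((x (pr (-1) (-1)) + x (pr (-1) 1) + x (pr 1 (-1)) - x (pr 1 1)) / 4) := by
  funext s; rw [pr_eta s]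
  cases s 0 <;> cases s 1 <;>
    norm_num [symOp, avg2, opZ, opS, opA, opB, slc, Fup] <;> ring

noncomputable def opN (x : (Fin 2 → SignType) → ℝ) : (Fin 2 → SignType) → ℝ :=
  fun s => (if s 0 = 0 then (1:ℝ) else -1) * x s

lemma opN_mem {X : Set ((Fin 2 → SignType) → ℝ)}
    (hflip : ∀ x ∈ X, ∀ j : Fin 2, ∀ u : SignType, u ≠ 0 →
      (fun s : Fin 2 → SignType => if s j = u then -(x s) else x s) ∈ X)
    {x} (hx : x ∈ X) : opN x ∈ X := by
  have h1 := hflip x hx 0 (-1) (by decide)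
  have h2 := hflip _ h1 0 1 (by decide)
  convert h2 using 1
  funext s; rw [pr_eta s]
  cases s 0 <;> cases s 1 <;> norm_num [opN]

lemma opN_slc (p q : ℝ) : opN (slc p q) = slc p (-q) := by
  funext s; rw [pr_eta s]
  cases s 0 <;> cases s 1 <;> norm_num [opN, slc, Fup]

lemma slc_smul (c p q : ℝ) : c • slc p q = slc (c * p) (c * q) := by
  funext s
  simp only [Pi.smul_apply, smul_eq_mul, slc]
  split_ifs <;> ring

lemma slc_cont : Continuous fun q : ℝ => slc 1 q := by
  apply continuous_pi; intro s
  by_cases h : s 0 = 0 ∧ s 1 = 0 <;> simp only [slc, h, if_pos, if_neg, if_true, if_false]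
  · exact continuous_const
  · exact continuous_id.mul continuous_const


/-- Self-duality implies Tsirelson's bound: any closed convex cone `X ⊆ NS_2` which respects
the symmetries and is self-dual under raising indices with `F^{st}` has maximal CHSH value
exactly `2√2`. -/
theorem statement16 (X : Set ((Fin 2 → SignType) → ℝ))
    (hXNS : X ⊆ NS 2)
    (hclosed : IsClosed X)
    (hadd : ∀ x ∈ X, ∀ y ∈ X, x + y ∈ X)
    (hsmul : ∀ c : ℝ, 0 ≤ c → ∀ x ∈ X, c • x ∈ X)
    (h0 : (0 : (Fin 2 → SignType) → ℝ) ∈ X)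
    (hswap : ∀ x ∈ X, (fun s : Fin 2 → SignType => x (fun j => s (Equiv.swap 0 1 j))) ∈ X)
    (hrelabel : ∀ x ∈ X, ∀ j : Fin 2,
      (fun s : Fin 2 → SignType => x (Function.update s j (-(s j)))) ∈ X)
    (hflip : ∀ x ∈ X, ∀ j : Fin 2, ∀ u : SignType, u ≠ 0 →
      (fun s : Fin 2 → SignType => if s j = u then -(x s) else x s) ∈ X)
    (hself : Set.BijOn
      (fun g : (Fin 2 → SignType) → ℝ =>
        fun s : Fin 2 → SignType => ∑ t : Fin 2 → SignType, Fup (s 0) (t 0) * Fup (s 1) (t 1) * g t)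
      (dualCone X) X) :
    (∀ x ∈ X, x (pr (-1) (-1)) + x (pr (-1) 1) + x (pr 1 (-1)) - x (pr 1 1)
      ≤ 2 * Real.sqrt 2 * x (pr 0 0)) ∧
    (∃ x ∈ X, x (pr 0 0) = 1 ∧
      x (pr (-1) (-1)) + x (pr (-1) 1) + x (pr 1 (-1)) - x (pr 1 1) = 2 * Real.sqrt 2) := by
  have hself' : Set.BijOn lam (dualCone X) X := hself
  -- symmetrization
  have hsym : ∀ x ∈ X, slc (x (pr 0 0))
      ((x (pr (-1) (-1)) + x (pr (-1) 1) + x (pr 1 (-1)) - x (pr 1 1)) / 4) ∈ X := by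
    intro x hx
    have h := symOp_mem hadd hsmul hswap hrelabel hflip hx
    rwa [symOp_eq] at h
  -- the slice interval
  set Q : Set ℝ := {q : ℝ | slc 1 q ∈ X} with hQdef
  have hQclosed : IsClosed Q := hclosed.preimage slc_cont
  have hQbdd : ∀ q ∈ Q, q ≤ 1 := by
    intro q hq
    have h := NSval (hXNS hq) 1 1 one_ne_zero one_ne_zero 1 1 (Or.inl rfl) (Or.inl rfl)
    simp [slc, Fup] at h
    linarith
  have hQbddAbove : BddAbove Q := ⟨1, fun q hq => hQbdd q hq⟩
  -- a nonzero element with positive apex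
  have hne : ∃ x ∈ X, x (pr 0 0) ≠ 0 := by
    by_contra h
    push_neg at h
    have hall : ∀ x ∈ X, x = 0 := fun x hx => NS_apex_zero (hXNS hx) (h x hx)
    have hdual : slc 1 0 ∈ dualCone X := by
      intro x hx; rw [hall x hx]; simp
    have hmem := hself'.mapsTo hdual
    have heq : lam (slc 1 0) = slc 1 0 := by rw [lam_slc]; norm_num
    rw [heq] at hmem
    have := congrFun (hall _ hmem) (pr 0 0)
    simp [slc] at this
  obtain ⟨x₀, hx₀, hx₀ne⟩ := hne
  have hx₀pos : 0 < x₀ (pr 0 0) :=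
    lt_of_le_of_ne (NS_apex_nonneg (hXNS hx₀)) (Ne.symm hx₀ne)
  -- Q is nonempty
  have hq₀ : (x₀ (pr 0 0))⁻¹ *
      ((x₀ (pr (-1) (-1)) + x₀ (pr (-1) 1) + x₀ (pr 1 (-1)) - x₀ (pr 1 1)) / 4) ∈ Q := by
    have hy := hsym x₀ hx₀
    have hs := hsmul (x₀ (pr 0 0))⁻¹ (by positivity) _ hy
    rw [slc_smul, inv_mul_cancel₀ (ne_of_gt hx₀pos)] at hs
    exact hs
  have hQne : Q.Nonempty := ⟨_, hq₀⟩
  set κ : ℝ := sSup Q with hκdef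
  have hκQ : κ ∈ Q := hQclosed.csSup_mem hQne hQbddAbove
  -- key bounds
  have key1 : ∀ x ∈ X,
      x (pr (-1) (-1)) + x (pr (-1) 1) + x (pr 1 (-1)) - x (pr 1 1) ≤ 4 * κ * x (pr 0 0) ∧
      -(x (pr (-1) (-1)) + x (pr (-1) 1) + x (pr 1 (-1)) - x (pr 1 1)) ≤ 4 * κ * x (pr 0 0) := by
    intro x hx
    set p := x (pr 0 0) with hp
    set c := x (pr (-1) (-1)) + x (pr (-1) 1) + x (pr 1 (-1)) - x (pr 1 1) with hc
    have hy : slc p (c / 4) ∈ X := hsym x hx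
    have hy' : slc p (-(c / 4)) ∈ X := by
      have := opN_mem hflip hy; rwa [opN_slc] at this
    have hpnn : 0 ≤ p := NS_apex_nonneg (hXNS hx)
    rcases eq_or_lt_of_le hpnn with hp0 | hppos
    · -- p = 0 : c = 0
      have h1 := NSval (hXNS hy) 1 1 one_ne_zero one_ne_zero 1 1 (Or.inl rfl) (Or.inl rfl)
      have h2 := NSval (hXNS hy') 1 1 one_ne_zero one_ne_zero 1 1 (Or.inl rfl) (Or.inl rfl)
      simp [slc, Fup, ← hp0] at h1 h2
      have hc0 : c = 0 := by linarith
      rw [hc0, ← hp0]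
      norm_num
    · have hmk : ∀ q : ℝ, slc p q ∈ X → q / p ≤ κ := by
        intro q hq
        have hs := hsmul p⁻¹ (by positivity) _ hq
        rw [slc_smul, inv_mul_cancel₀ (ne_of_gt hppos)] at hs
        have : p⁻¹ * q = q / p := by field_simp
        rw [this] at hs
        exact le_csSup hQbddAbove hs
      have h1 := hmk _ hy
      have h2 := hmk _ hy'
      rw [div_le_iff₀ hppos] at h1 h2
      constructor <;> nlinarith
  have hapexnn : ∀ x ∈ X, 0 ≤ x (pr 0 0) := fun x hx => NS_apex_nonneg (hXNS hx)
  -- κ > 0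
  have hκpos : 0 < κ := by
    rcases lt_or_ge 0 κ with h | h
    · exact h
    · exfalso
      have hczero : ∀ x ∈ X,
          x (pr (-1) (-1)) + x (pr (-1) 1) + x (pr 1 (-1)) - x (pr 1 1) = 0 := by
        intro x hx
        have hk := key1 x hx
        have hnn := hapexnn x hx
        have : 4 * κ * x (pr 0 0) ≤ 0 := by nlinarith
        linarith [hk.1, hk.2]
      have hdual : slc 1 1 ∈ dualCone X := by
        intro x hx
        rw [slc_dot, hczero x hx]
        have := hapexnn x hx; linarith
      have hmem := hself'.mapsTo hdual
      rw [lam_slc] at hmem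
      have := hczero _ hmem
      simp [slc, Fup] at this
      linarith
  -- 1 ≤ 2 κ²
  have hκ1 : 1 ≤ 2 * κ ^ 2 := by
    have hdual : slc 1 (1 / (4 * κ)) ∈ dualCone X := by
      intro x hx
      rw [slc_dot]
      have hk := (key1 x hx).2
      have heq : 1 * x (pr 0 0) + 1 / (4 * κ) *
          (x (pr (-1) (-1)) + x (pr (-1) 1) + x (pr 1 (-1)) - x (pr 1 1))
          = (1 / (4 * κ)) * (4 * κ * x (pr 0 0) +
            (x (pr (-1) (-1)) + x (pr (-1) 1) + x (pr 1 (-1)) - x (pr 1 1))) := by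
        field_simp
      rw [heq]
      have h4κ : 0 < 1 / (4 * κ) := by positivity
      have : 0 ≤ 4 * κ * x (pr 0 0) +
          (x (pr (-1) (-1)) + x (pr (-1) 1) + x (pr 1 (-1)) - x (pr 1 1)) := by linarith
      positivity
    have hmem := hself'.mapsTo hdual
    rw [lam_slc] at hmem
    have heq : 2 * (1 / (4 * κ)) = 1 / (2 * κ) := by
      have hκne : κ ≠ 0 := ne_of_gt hκpos
      field_simp
      ring
    rw [heq] at hmem
    have hle : 1 / (2 * κ) ≤ κ := le_csSup hQbddAbove hmem
    rw [div_le_iff₀ (by positivity)] at hle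
    nlinarith
  -- 2 κ² ≤ 1
  have hκ2 : 2 * κ ^ 2 ≤ 1 := by
    obtain ⟨g, hg, hΛg⟩ := hself'.surjOn hκQ
    have hx' : slc 1 (-κ) ∈ X := by
      have := opN_mem hflip hκQ; rwa [opN_slc] at this
    have hpair : 0 ≤ ∑ v, g v * slc 1 (-κ) v := hg _ hx'
    have heq1 : slc 1 (-κ) = lam (slc 1 (-κ / 2)) := by
      rw [lam_slc]; congr 1; ring
    have heq2 : ∑ v, g v * slc 1 (-κ) v = 1 - 2 * κ ^ 2 := by
      rw [heq1]
      have := lam_adj (slc 1 (-κ / 2)) g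
      calc ∑ v, g v * lam (slc 1 (-κ / 2)) v
          = ∑ v, lam (slc 1 (-κ / 2)) v * g v := by
            exact Finset.sum_congr rfl fun v _ => mul_comm _ _
        _ = ∑ v, slc 1 (-κ / 2) v * lam g v := lam_adj _ _
        _ = ∑ v, slc 1 (-κ / 2) v * slc 1 κ v := by rw [show lam g = slc 1 κ from hΛg]
        _ = 1 * 1 + 4 * (-κ / 2 * κ) := slc_pair _ _ _ _
        _ = 1 - 2 * κ ^ 2 := by ring
    rw [heq2] at hpair
    linarith
  -- κ = √2 / 2
  have hs2 : Real.sqrt 2 ^ 2 = 2 := Real.sq_sqrt (by norm_num)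
  have hs2pos : 0 < Real.sqrt 2 := Real.sqrt_pos.2 (by norm_num)
  have hκval : κ = Real.sqrt 2 / 2 := by
    have hfac : (κ - Real.sqrt 2 / 2) * (κ + Real.sqrt 2 / 2) = 0 := by nlinarith
    rcases mul_eq_zero.1 hfac with h | h
    · linarith
    · linarith
  constructor
  · intro x hx
    have h1 := (key1 x hx).1
    rw [hκval] at h1
    calc x (pr (-1) (-1)) + x (pr (-1) 1) + x (pr 1 (-1)) - x (pr 1 1)
        ≤ 4 * (Real.sqrt 2 / 2) * x (pr 0 0) := h1
      _ = 2 * Real.sqrt 2 * x (pr 0 0) := by ring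
  · refine ⟨slc 1 κ, hκQ, by simp [slc], ?_⟩
    simp [slc, Fup]
    rw [hκval]; ring
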